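/- Let H be a real Hilbert space, K ⊆ H a nonempty closed convex set with metric projection π : H → H, and let 𝔸, ℂ : H → H be bounded symmetric linear operators with ℂ∘𝔸 = Id and 𝔸∘ℂ = Id, where ℂ is coercive with constant γ_ℂ > 0 and has operator norm ‖ℂ‖. Let λ > 0, T > 0, w ∈ L²(0,T;H), σ₀ ∈ K, and let σ_λ, σ : [0,T] → H be H¹(0,T;H)-curves with derivatives σ_λ', σ' and σ_λ(0) = σ(0) = σ₀, such that for almost every t ∈ (0,T): (i) 𝔸σ_λ'(t) = w(t) − λ⁻¹(σ_λ(t) − π(σ_λ(t))), and (ii) σ(t) ∈ K and ⟪w(t) − 𝔸σ'(t), τ − σ(t)⟫ ≤ 0 for all τ ∈ K. Then for every t ∈ [0,T]: ‖σ_λ(t) − σ(t)‖² ≤ λ (‖ℂ‖²/γ_ℂ) ∫₀ᵀ ‖w(s) − 𝔸σ'(s)‖² ds. -/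

import Mathlib

open RealInnerProductSpace MeasureTheory Set intervalIntegral

/-- `σ : [0,T] → H` is an `H¹(0,T;H)`-curve with derivative `σ'`: the derivative is
Bochner measurable and square integrable on `(0,T)`, and
`σ(t) = σ(0) + ∫₀ᵗ σ'(s) ds` for all `t ∈ [0,T]`. -/
def IsH1Curve {H : Type*} [NormedAddCommGroup H] [NormedSpace ℝ H] [CompleteSpace H]
    (T : ℝ) (σ σ' : ℝ → H) : Prop :=
  MemLp σ' 2 (volume.restrict (Set.Ioo 0 T)) ∧
    ∀ t ∈ Set.Icc 0 T, σ t = σ 0 + ∫ s in (0:ℝ)..t, σ' s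

lemma key_identity {H : Type*} [NormedAddCommGroup H] [InnerProductSpace ℝ H] [CompleteSpace H]
    (A : H →L[ℝ] H) (hAsym : ∀ x y, ⟪A x, y⟫ = ⟪x, A y⟫)
    (u : ℝ → H) (t : ℝ) (ht : 0 ≤ t)
    (hu : IntegrableOn u (Set.Ioc 0 t)) :
    ⟪A (∫ r in (0:ℝ)..t, u r), ∫ r in (0:ℝ)..t, u r⟫
      = 2 * ∫ s in (0:ℝ)..t, ⟪A (u s), ∫ r in (0:ℝ)..s, u r⟫ := by
  set E : ℝ → H := fun s => ∫ r in (0:ℝ)..s, u r with hEdef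
  have hEs : ∀ s ∈ Icc (0:ℝ) t, E s = ∫ r in Ioc 0 s, u r := fun s hs =>
    intervalIntegral.integral_of_le hs.1
  -- continuity and boundedness of E
  have huIcc : IntegrableOn u (Icc 0 t) := (integrableOn_Icc_iff_integrableOn_Ioc).mpr hu
  have hEcont : ContinuousOn E (Icc 0 t) :=
    (intervalIntegral.continuousOn_primitive huIcc).congr fun s hs => hEs s hs
  obtain ⟨M, hM⟩ := isCompact_Icc.exists_bound_of_continuousOn hEcont
  set μ := volume.restrict (Set.Ioc (0:ℝ) t) with hμdef
  have hmu : AEStronglyMeasurable u μ := hu.aestronglyMeasurable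
  have hEmeas : AEStronglyMeasurable E μ :=
    (hEcont.aestronglyMeasurable measurableSet_Icc).mono_measure
      (Measure.restrict_mono Ioc_subset_Icc_self le_rfl)
  have huInt : Integrable u μ := hu
  have hAu : AEStronglyMeasurable (fun s => A (u s)) μ :=
    A.continuous.comp_aestronglyMeasurable hmu
  have hunorm : Integrable (fun s => ‖u s‖) μ := huInt.norm
  -- integrability of the two integrands
  have hb : Integrable (fun s => ⟪A (u s), E s⟫) μ := by
    refine Integrable.mono' ((hunorm.const_mul (‖A‖ * M))) (hAu.inner hEmeas) ?_
    filter_upwards [ae_restrict_mem measurableSet_Ioc] with s hs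
    calc ‖⟪A (u s), E s⟫‖ ≤ ‖A (u s)‖ * ‖E s‖ := norm_inner_le_norm _ _
      _ ≤ (‖A‖ * ‖u s‖) * M := by
          apply mul_le_mul (A.le_opNorm _) (hM s (Ioc_subset_Icc_self hs)) (norm_nonneg _)
          positivity
      _ = ‖A‖ * M * ‖u s‖ := by ring
  have hc : Integrable (fun s => ⟪A (u s), E t - E s⟫) μ := by
    refine Integrable.mono' ((hunorm.const_mul (‖A‖ * (M + M)))) (hAu.inner ?_) ?_
    · exact aestronglyMeasurable_const.sub hEmeas
    filter_upwards [ae_restrict_mem measurableSet_Ioc] with s hs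
    calc ‖⟪A (u s), E t - E s⟫‖ ≤ ‖A (u s)‖ * ‖E t - E s‖ := norm_inner_le_norm _ _
      _ ≤ (‖A‖ * ‖u s‖) * (M + M) := by
          apply mul_le_mul (A.le_opNorm _) ?_ (norm_nonneg _) (by positivity)
          calc ‖E t - E s‖ ≤ ‖E t‖ + ‖E s‖ := norm_sub_le _ _
            _ ≤ M + M := add_le_add (hM t (right_mem_Icc.mpr ht))
                (hM s (Ioc_subset_Icc_self hs))
      _ = ‖A‖ * (M + M) * ‖u s‖ := by ring
  -- split E t = E s + ∫_{Ioc s t} u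
  have hsplit : ∀ s ∈ Icc (0:ℝ) t, E t - E s = ∫ r in Ioc s t, u r := by
    intro s hs
    have hadd : (∫ r in Ioc (0:ℝ) t, u r) = (∫ r in Ioc (0:ℝ) s, u r) + ∫ r in Ioc s t, u r := by
      rw [← setIntegral_union (Set.Ioc_disjoint_Ioc_of_le le_rfl) measurableSet_Ioc
        (hu.mono_set (Ioc_subset_Ioc_right hs.2)) (hu.mono_set (Ioc_subset_Ioc_left hs.1)),
        Ioc_union_Ioc_eq_Ioc hs.1 hs.2]
    rw [hEs t (right_mem_Icc.mpr ht), hEs s hs, hadd]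
    abel
  -- Step A
  have stepA : ⟪A (E t), E t⟫ = ∫ s in Ioc (0:ℝ) t, ⟪A (E t), u s⟫ := by
    nth_rewrite 2 [hEs t (right_mem_Icc.mpr ht)]
    rw [← integral_inner hu (A (E t))]
  -- rewrite integrand using symmetry: ⟪A (E t), u s⟫ = ⟪A (u s), E t⟫
  have stepA' : ⟪A (E t), E t⟫ = ∫ s in Ioc (0:ℝ) t, ⟪A (u s), E t⟫ := by
    rw [stepA]
    refine setIntegral_congr_fun measurableSet_Ioc fun s _ => ?_
    rw [hAsym, real_inner_comm]
  -- decompose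
  have hdecomp : ∫ s in Ioc (0:ℝ) t, ⟪A (u s), E t⟫
      = (∫ s in Ioc (0:ℝ) t, ⟪A (u s), E s⟫) + ∫ s in Ioc (0:ℝ) t, ⟪A (u s), E t - E s⟫ := by
    rw [← integral_add hb hc]
    refine setIntegral_congr_fun measurableSet_Ioc fun s _ => ?_
    rw [← inner_add_right, add_sub_cancel]
  -- Fubini step: the second integral equals the first
  have hfub : ∫ s in Ioc (0:ℝ) t, ⟪A (u s), E t - E s⟫
      = ∫ s in Ioc (0:ℝ) t, ⟪A (u s), E s⟫ := by
    set F : ℝ × ℝ → ℝ := fun p => if p.1 < p.2 then ⟪A (u p.1), u p.2⟫ else 0 with hFdef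
    have hS : MeasurableSet {p : ℝ × ℝ | p.1 < p.2} :=
      measurableSet_lt measurable_fst measurable_snd
    have hFaesm : AEStronglyMeasurable F (μ.prod μ) := by
      have h1 : AEStronglyMeasurable (fun p : ℝ × ℝ => ⟪A (u p.1), u p.2⟫) (μ.prod μ) :=
        ((A.continuous.comp_aestronglyMeasurable hmu).comp_fst).inner hmu.comp_snd
      have : F = Set.indicator {p : ℝ × ℝ | p.1 < p.2}
          (fun p : ℝ × ℝ => ⟪A (u p.1), u p.2⟫) := by
        ext p; simp [hFdef, Set.indicator_apply]
      rw [this]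
      exact h1.indicator hS
    have hFint : Integrable F (μ.prod μ) := by
      refine Integrable.mono' (((hunorm.mul_prod hunorm).const_mul ‖A‖)) hFaesm ?_
      refine Filter.Eventually.of_forall fun p => ?_
      simp only [hFdef]
      split_ifs with h
      · calc ‖⟪A (u p.1), u p.2⟫‖ ≤ ‖A (u p.1)‖ * ‖u p.2‖ := norm_inner_le_norm _ _
          _ ≤ (‖A‖ * ‖u p.1‖) * ‖u p.2‖ :=
              mul_le_mul_of_nonneg_right (A.le_opNorm _) (norm_nonneg _)
          _ = ‖A‖ * (‖u p.1‖ * ‖u p.2‖) := by ring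
      · simp; positivity
    have lhs_eq : ∫ s in Ioc (0:ℝ) t, ⟪A (u s), E t - E s⟫
        = ∫ s in Ioc (0:ℝ) t, ∫ r in Ioc (0:ℝ) t, F (s, r) := by
      refine setIntegral_congr_fun measurableSet_Ioc fun s hs => ?_
      rw [hsplit s (Ioc_subset_Icc_self hs)]
      have h2 : ∫ r in Ioc s t, ⟪A (u s), u r⟫ = ∫ r in Ioc (0:ℝ) t, F (s, r) := by
        have : ∀ r, F (s, r) = Set.indicator (Set.Ioi s) (fun r => ⟪A (u s), u r⟫) r := by
          intro r; simp [hFdef, Set.indicator_apply]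
        simp_rw [this]
        rw [setIntegral_indicator measurableSet_Ioi]
        congr 1
        rw [Set.Ioc_inter_Ioi, max_eq_right hs.1.le]
      rw [← h2, ← integral_inner (hu.mono_set (Ioc_subset_Ioc_left hs.1.le)) (A (u s))]
    have swap : ∫ s in Ioc (0:ℝ) t, ∫ r in Ioc (0:ℝ) t, F (s, r)
        = ∫ r in Ioc (0:ℝ) t, ∫ s in Ioc (0:ℝ) t, F (s, r) :=
      integral_integral_swap hFint
    have rhs_eq : ∫ r in Ioc (0:ℝ) t, ∫ s in Ioc (0:ℝ) t, F (s, r)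
        = ∫ r in Ioc (0:ℝ) t, ⟪A (u r), E r⟫ := by
      refine setIntegral_congr_fun measurableSet_Ioc fun r hr => ?_
      have h3 : ∀ s, F (s, r) = Set.indicator (Set.Iio r) (fun s => ⟪A (u s), u r⟫) s := by
        intro s; simp [hFdef, Set.indicator_apply]
      simp_rw [h3]
      rw [setIntegral_indicator measurableSet_Iio]
      have h4 : Set.Ioc (0:ℝ) t ∩ Set.Iio r = Set.Ioo 0 r := by
        ext s
        simp only [Set.mem_inter_iff, Set.mem_Ioc, Set.mem_Iio, Set.mem_Ioo]
        exact ⟨fun ⟨⟨h1, _⟩, h2⟩ => ⟨h1, h2⟩, fun ⟨h1, h2⟩ => ⟨⟨h1, (h2.trans_le hr.2).le⟩, h2⟩⟩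
      rw [h4, ← integral_Ioc_eq_integral_Ioo]
      have h5 : ∀ s ∈ Ioc (0:ℝ) r, ⟪A (u s), u r⟫ = ⟪A (u r), u s⟫ := fun s _ => by
        rw [hAsym, real_inner_comm]
      rw [setIntegral_congr_fun measurableSet_Ioc h5,
        integral_inner (hu.mono_set (Ioc_subset_Ioc_right hr.2)) (A (u r)),
        hEs r (Ioc_subset_Icc_self hr)]
    rw [lhs_eq, swap, rhs_eq]
  have goal_eq : (∫ s in (0:ℝ)..t, ⟪A (u s), E s⟫) = ∫ s in Ioc (0:ℝ) t, ⟪A (u s), E s⟫ :=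
    intervalIntegral.integral_of_le ht
  show ⟪A (E t), E t⟫ = 2 * ∫ s in (0:ℝ)..t, ⟪A (u s), E s⟫
  rw [goal_eq, stepA', hdecomp, hfub]; ring

set_option maxHeartbeats 2000000 in
/-- Uniform-in-time error estimate for the Yosida regularization of the perfectly
plastic flow rule: if `σ_λ` solves `𝔸σ̇_λ = w − λ⁻¹(σ_λ − π(σ_λ))` and `σ` solves
the unregularized flow rule `w − 𝔸σ̇ ∈ ∂I_K(σ)` with common initial value `σ₀ ∈ K`,
then `‖σ_λ(t) − σ(t)‖² ≤ λ(‖ℂ‖²/γ_ℂ)∫₀ᵀ‖w − 𝔸σ̇‖² ds` for every `t ∈ [0,T]`. -/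
theorem yosida_regularization_error_estimate
    {H : Type*} [NormedAddCommGroup H] [InnerProductSpace ℝ H] [CompleteSpace H]
    (K : Set H) (hK : K.Nonempty) (hKclosed : IsClosed K) (hKconv : Convex ℝ K)
    (π : H → H) (hπK : ∀ x, π x ∈ K)
    (hπ : ∀ x, ∀ k ∈ K, ⟪x - π x, k - π x⟫ ≤ 0)
    (A C : H →L[ℝ] H)
    (hAsym : ∀ x y, ⟪A x, y⟫ = ⟪x, A y⟫) (hCsym : ∀ x y, ⟪C x, y⟫ = ⟪x, C y⟫)
    (hCA : ∀ x, C (A x) = x) (hAC : ∀ x, A (C x) = x)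
    (γC : ℝ) (hγC : 0 < γC) (hCcoer : ∀ h : H, γC * ‖h‖ ^ 2 ≤ ⟪C h, h⟫)
    (lam T : ℝ) (hlam : 0 < lam) (hT : 0 < T)
    (w : ℝ → H) (hw : MemLp w 2 (volume.restrict (Set.Ioo 0 T)))
    (σ₀ : H) (hσ₀ : σ₀ ∈ K)
    (σlam σ σlam' σ' : ℝ → H)
    (hσlam : IsH1Curve T σlam σlam') (hσ : IsH1Curve T σ σ')
    (hinitlam : σlam 0 = σ₀) (hinit : σ 0 = σ₀)
    (heqlam : ∀ᵐ t ∂(volume.restrict (Set.Ioo 0 T)),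
      A (σlam' t) = w t - lam⁻¹ • (σlam t - π (σlam t)))
    (heq : ∀ᵐ t ∂(volume.restrict (Set.Ioo 0 T)),
      σ t ∈ K ∧ ∀ τ ∈ K, ⟪w t - A (σ' t), τ - σ t⟫ ≤ 0) :
    ∀ t ∈ Set.Icc 0 T,
      ‖σlam t - σ t‖ ^ 2 ≤
        lam * (‖C‖ ^ 2 / γC) * ∫ s in (0:ℝ)..T, ‖w s - A (σ' s)‖ ^ 2 := by
  intro t htmem
  obtain ⟨ht0, htT⟩ := htmem
  set q : ℝ → H := fun s => w s - A (σ' s) with hqdef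
  set u : ℝ → H := fun s => σlam' s - σ' s with hudef
  set e : ℝ → H := fun s => σlam s - σ s with hedef
  haveI hfin : IsFiniteMeasure (volume.restrict (Set.Ioo (0:ℝ) T)) := by
    constructor; rw [Measure.restrict_apply_univ]; exact measure_Ioo_lt_top
  have hu2 : MemLp u 2 (volume.restrict (Set.Ioo 0 T)) := hσlam.1.sub hσ.1
  have hAσ' : MemLp (fun s => A (σ' s)) 2 (volume.restrict (Set.Ioo 0 T)) :=
    A.comp_memLp' hσ.1
  have hq2 : MemLp q 2 (volume.restrict (Set.Ioo 0 T)) := hw.sub hAσ'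
  have hInt : ∀ (f : ℝ → H), MemLp f 2 (volume.restrict (Set.Ioo 0 T)) →
      ∀ s ∈ Set.Icc (0:ℝ) T, IntegrableOn f (Set.Ioc 0 s) := by
    intro f hf s hs
    have h1 : Integrable f (volume.restrict (Set.Ioo 0 T)) := hf.integrable one_le_two
    have h2 : IntegrableOn f (Set.Ioc 0 T) := (integrableOn_Ioc_iff_integrableOn_Ioo).mpr h1
    exact h2.mono_set (Set.Ioc_subset_Ioc le_rfl hs.2)
  have he : ∀ s ∈ Set.Icc (0:ℝ) T, e s = ∫ r in (0:ℝ)..s, u r := by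
    intro s hs
    have h1 : IntervalIntegrable σlam' volume 0 s :=
      (intervalIntegrable_iff_integrableOn_Ioc_of_le hs.1).mpr (hInt σlam' hσlam.1 s hs)
    have h2 : IntervalIntegrable σ' volume 0 s :=
      (intervalIntegrable_iff_integrableOn_Ioc_of_le hs.1).mpr (hInt σ' hσ.1 s hs)
    show σlam s - σ s = _
    rw [hσlam.2 s hs, hσ.2 s hs, hinitlam, hinit, intervalIntegral.integral_sub h1 h2]
    abel
  have heC : ContinuousOn e (Set.Icc 0 T) := by
    have h1 : IntegrableOn u (Set.Icc 0 T) :=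
      (integrableOn_Icc_iff_integrableOn_Ioc).mpr (hInt u hu2 T ⟨hT.le, le_rfl⟩)
    exact (intervalIntegral.continuousOn_primitive h1).congr fun s hs => by
      rw [he s hs, intervalIntegral.integral_of_le hs.1]
  obtain ⟨M, hM⟩ := isCompact_Icc.exists_bound_of_continuousOn heC
  -- key identity
  have hkey : ⟪A (e t), e t⟫ = 2 * ∫ s in (0:ℝ)..t, ⟪A (u s), e s⟫ := by
    have h1 := key_identity A hAsym u t ht0 (hInt u hu2 t ⟨ht0, htT⟩)
    have h2 : (∫ s in (0:ℝ)..t, ⟪A (u s), ∫ r in (0:ℝ)..s, u r⟫)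
        = ∫ s in (0:ℝ)..t, ⟪A (u s), e s⟫ := by
      refine intervalIntegral.integral_congr fun s hs => ?_
      rw [Set.uIcc_of_le ht0] at hs
      rw [he s ⟨hs.1, hs.2.trans htT⟩]
    rw [he t ⟨ht0, htT⟩, h1, h2]
  -- integrability of the inner product integrand on (0,t)
  have hmu : AEStronglyMeasurable u (volume.restrict (Set.Ioo 0 t)) :=
    hu2.aestronglyMeasurable.mono_measure
      (Measure.restrict_mono (Set.Ioo_subset_Ioo le_rfl htT) le_rfl)
  have hme : AEStronglyMeasurable e (volume.restrict (Set.Ioo 0 t)) :=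
    (heC.aestronglyMeasurable measurableSet_Icc).mono_measure
      (Measure.restrict_mono (Set.Ioo_subset_Icc_self.trans
        (Set.Icc_subset_Icc le_rfl htT)) le_rfl)
  have hbint : Integrable (fun s => ⟪A (u s), e s⟫) (volume.restrict (Set.Ioo 0 t)) := by
    refine Integrable.mono'
      ((((hInt u hu2 t ⟨ht0, htT⟩).mono_set Set.Ioo_subset_Ioc_self).norm.const_mul (‖A‖ * M)))
      ((A.continuous.comp_aestronglyMeasurable hmu).inner hme) ?_
    filter_upwards [ae_restrict_mem measurableSet_Ioo] with s hs
    have hsIcc : s ∈ Set.Icc (0:ℝ) T := ⟨hs.1.le, hs.2.le.trans htT⟩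
    calc ‖⟪A (u s), e s⟫‖ ≤ ‖A (u s)‖ * ‖e s‖ := norm_inner_le_norm _ _
      _ ≤ (‖A‖ * ‖u s‖) * M :=
          mul_le_mul (A.le_opNorm _) (hM s hsIcc) (norm_nonneg _) (by positivity)
      _ = ‖A‖ * M * ‖u s‖ := by ring
  -- integrability of ‖q‖²
  have hqsq : Integrable (fun s => ‖q s‖ ^ 2) (volume.restrict (Set.Ioo 0 T)) :=
    (memLp_two_iff_integrable_sq_norm hq2.aestronglyMeasurable).mp hq2
  have hqsqT : IntegrableOn (fun s => ‖q s‖ ^ 2) (Set.Ioo 0 T) volume := hqsq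
  have hqsqt : IntegrableOn (fun s => ‖q s‖ ^ 2) (Set.Ioo 0 t) volume :=
    hqsqT.mono_set (Set.Ioo_subset_Ioo le_rfl htT)
  -- the a.e. bound
  have hbound : ∀ᵐ s ∂(volume.restrict (Set.Ioo 0 t)),
      ⟪A (u s), e s⟫ ≤ lam / 4 * ‖q s‖ ^ 2 := by
    have h1 := ae_restrict_of_ae_restrict_of_subset (Set.Ioo_subset_Ioo le_rfl htT) heqlam
    have h2 := ae_restrict_of_ae_restrict_of_subset (Set.Ioo_subset_Ioo le_rfl htT) heq
    filter_upwards [h1, h2] with s hA hKs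
    obtain ⟨hsK, hflow⟩ := hKs
    set d := σlam s - π (σlam s) with hddef
    have hAu : A (u s) = q s - lam⁻¹ • d := by
      show A (σlam' s - σ' s) = _
      rw [map_sub, hA]
      show _ = (w s - A (σ' s)) - lam⁻¹ • d
      abel
    have hes : e s = d + (π (σlam s) - σ s) := by
      show σlam s - σ s = _
      rw [hddef]; abel
    have hip1 : ⟪d, σ s - π (σlam s)⟫ ≤ 0 := hπ (σlam s) (σ s) hsK
    have hip2 : ⟪q s, π (σlam s) - σ s⟫ ≤ 0 := hflow _ (hπK (σlam s))
    have hde : ‖d‖ ^ 2 ≤ ⟪d, e s⟫ := by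
      rw [hes, inner_add_right, real_inner_self_eq_norm_sq]
      have h3 : 0 ≤ ⟪d, π (σlam s) - σ s⟫ := by
        rw [show π (σlam s) - σ s = -(σ s - π (σlam s)) by abel, inner_neg_right]
        linarith
      linarith
    have hqe : ⟪q s, e s⟫ ≤ ‖q s‖ * ‖d‖ := by
      rw [hes, inner_add_right]
      have h3 := real_inner_le_norm (q s) d
      linarith
    have hmain : ⟪A (u s), e s⟫ = ⟪q s, e s⟫ - lam⁻¹ * ⟪d, e s⟫ := by
      rw [hAu, inner_sub_left, real_inner_smul_left]
    rw [hmain]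
    have h4 : lam⁻¹ * ‖d‖ ^ 2 ≤ lam⁻¹ * ⟪d, e s⟫ :=
      mul_le_mul_of_nonneg_left hde (inv_nonneg.mpr hlam.le)
    have h5 : lam * lam⁻¹ = 1 := mul_inv_cancel₀ hlam.ne'
    nlinarith [mul_nonneg (inv_nonneg.mpr hlam.le) (sq_nonneg (‖d‖ - lam / 2 * ‖q s‖)),
      norm_nonneg d, norm_nonneg (q s), sq_nonneg (‖q s‖)]
  -- integrate the bound
  have hmono : ∫ s in Set.Ioo (0:ℝ) t, ⟪A (u s), e s⟫
      ≤ ∫ s in Set.Ioo (0:ℝ) t, lam / 4 * ‖q s‖ ^ 2 :=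
    integral_mono_ae hbint (hqsqt.const_mul _) hbound
  have hsubset : ∫ s in Set.Ioo (0:ℝ) t, ‖q s‖ ^ 2 ≤ ∫ s in Set.Ioo (0:ℝ) T, ‖q s‖ ^ 2 :=
    setIntegral_mono_set hqsqT
      (Filter.Eventually.of_forall fun s => by positivity)
      ((Set.Ioo_subset_Ioo le_rfl htT).eventuallyLE)
  have hAet : ⟪A (e t), e t⟫ ≤ lam / 2 * ∫ s in (0:ℝ)..T, ‖q s‖ ^ 2 := by
    rw [hkey, intervalIntegral.integral_of_le ht0, integral_Ioc_eq_integral_Ioo,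
      intervalIntegral.integral_of_le hT.le, integral_Ioc_eq_integral_Ioo]
    calc 2 * ∫ s in Set.Ioo (0:ℝ) t, ⟪A (u s), e s⟫
        ≤ 2 * ∫ s in Set.Ioo (0:ℝ) t, lam / 4 * ‖q s‖ ^ 2 := by linarith
      _ = lam / 2 * ∫ s in Set.Ioo (0:ℝ) t, ‖q s‖ ^ 2 := by
          rw [MeasureTheory.integral_const_mul]; ring
      _ ≤ lam / 2 * ∫ s in Set.Ioo (0:ℝ) T, ‖q s‖ ^ 2 :=
          mul_le_mul_of_nonneg_left hsubset (by linarith)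
  have hTnn : 0 ≤ ∫ s in (0:ℝ)..T, ‖q s‖ ^ 2 := by
    rw [intervalIntegral.integral_of_le hT.le]
    exact setIntegral_nonneg measurableSet_Ioc fun s _ => by positivity
  have hcoer : ‖e t‖ ^ 2 ≤ ‖C‖ ^ 2 / γC * ⟪A (e t), e t⟫ := by
    have h1 : γC * ‖A (e t)‖ ^ 2 ≤ ⟪A (e t), e t⟫ := by
      have h2 := hCcoer (A (e t))
      rwa [hCA, real_inner_comm] at h2
    have h2 : ‖e t‖ ≤ ‖C‖ * ‖A (e t)‖ := by
      conv_lhs => rw [← hCA (e t)]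
      exact C.le_opNorm _
    have h3 : ‖e t‖ ^ 2 ≤ ‖C‖ ^ 2 * ‖A (e t)‖ ^ 2 := by
      nlinarith [norm_nonneg (e t), norm_nonneg (A (e t)), C.opNorm_nonneg]
    rw [div_mul_eq_mul_div, le_div_iff₀ hγC]
    nlinarith [mul_le_mul_of_nonneg_left h1 (sq_nonneg ‖C‖)]
  have hfac : 0 ≤ ‖C‖ ^ 2 / γC := by positivity
  calc ‖e t‖ ^ 2 ≤ ‖C‖ ^ 2 / γC * ⟪A (e t), e t⟫ := hcoer
    _ ≤ ‖C‖ ^ 2 / γC * (lam / 2 * ∫ s in (0:ℝ)..T, ‖q s‖ ^ 2) :=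
        mul_le_mul_of_nonneg_left hAet hfac
    _ ≤ lam * (‖C‖ ^ 2 / γC) * ∫ s in (0:ℝ)..T, ‖q s‖ ^ 2 := by
        nlinarith [mul_nonneg (mul_nonneg hlam.le hfac) hTnn]
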